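/- Let φ(x) = sin(x) + α on the one-dimensional torus [0, 2π] with uniform probability measure μ, Poincaré constant η = 1, E = ∫φ dμ = α, and ∫φ² dμ = 1/2 + α². Then the criterion −(inf φ)·(∫φ² dμ)/(∫φ dμ)² < η, i.e. (1−α)(1+2α²)/(2α²) < 1, holds if and only if α > α₀, where α₀ ∈ (0,1) is the unique real root of α³ + α/2 − 1/2 = 0. In particular there exist α ∈ (α₀, 1) for which the criterion holds while inf φ = α − 1 < 0. -/

import Mathlib

open Real intervalIntegral

lemma cubic_mono : StrictMono (fun a : ℝ => a ^ 3 + a / 2 - 1 / 2) := by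
  intro a b h
  simp only
  nlinarith [sq_nonneg (a + b), sq_nonneg a, sq_nonneg b]

theorem torus_criterion :
    (∀ α : ℝ, (1 / (2 * π)) * ∫ x in (0:ℝ)..(2 * π), (Real.sin x + α) = α) ∧
    (∀ α : ℝ, (1 / (2 * π)) * ∫ x in (0:ℝ)..(2 * π), (Real.sin x + α) ^ 2 = 1 / 2 + α ^ 2) ∧
    (∀ α : ℝ, IsGLB ((fun x => Real.sin x + α) '' Set.Icc 0 (2 * π)) (α - 1)) ∧
    ∃ α₀ : ℝ, (α₀ ^ 3 + α₀ / 2 - 1 / 2 = 0) ∧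
      (∀ β : ℝ, β ^ 3 + β / 2 - 1 / 2 = 0 → β = α₀) ∧
      α₀ ∈ Set.Ioo (0 : ℝ) 1 ∧
      (∀ α : ℝ, 0 < α →
        ((1 - α) * (1 + 2 * α ^ 2) / (2 * α ^ 2) < 1 ↔ α₀ < α)) ∧
      ∃ α ∈ Set.Ioo α₀ 1,
        (1 - α) * (1 + 2 * α ^ 2) / (2 * α ^ 2) < 1 ∧ α - 1 < 0 := by
  have hπ : (0:ℝ) < π := Real.pi_pos
  refine ⟨?_, ?_, ?_, ?_⟩
  · intro α
    rw [integral_add intervalIntegrable_sin intervalIntegrable_const,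
      integral_sin, integral_const]
    simp [Real.cos_two_pi]
    field_simp
  · intro α
    have h1 : ∀ x : ℝ, (Real.sin x + α) ^ 2 = Real.sin x ^ 2 + (2 * α * Real.sin x + α ^ 2) := by
      intro x; ring
    simp only [h1]
    rw [integral_add (f := fun x => Real.sin x ^ 2) (((continuous_sin.pow 2).intervalIntegrable _ _))
        (((intervalIntegrable_sin).const_mul _).add intervalIntegrable_const),
      integral_add ((intervalIntegrable_sin).const_mul _)
        intervalIntegrable_const,
      integral_sin_sq, integral_const_mul, integral_sin,
      integral_const]
    simp [Real.cos_two_pi, Real.sin_two_pi]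
    field_simp
  · intro α
    apply IsLeast.isGLB
    constructor
    · refine ⟨3 * π / 2, ?_, ?_⟩
      · constructor <;> nlinarith
      · have : Real.sin (3 * π / 2) = -1 := by
          have : (3 : ℝ) * π / 2 = π + π / 2 := by ring
          rw [this, Real.sin_add, Real.sin_pi, Real.cos_pi, Real.sin_pi_div_two]
          ring
        simp [this]; ring
    · rintro y ⟨x, _, rfl⟩
      have := Real.neg_one_le_sin x
      simp only
      linarith
  · have hcont : ContinuousOn (fun a : ℝ => a ^ 3 + a / 2 - 1 / 2) (Set.Icc 0 1) := by
      fun_prop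
    obtain ⟨α₀, hmem, hroot0⟩ := intermediate_value_Icc (by norm_num : (0:ℝ) ≤ 1) hcont
      (by constructor <;> norm_num : (0:ℝ) ∈ Set.Icc ((0:ℝ)^3 + 0/2 - 1/2) (1^3 + 1/2 - 1/2))
    have hroot : α₀ ^ 3 + α₀ / 2 - 1 / 2 = 0 := hroot0
    have hioo : α₀ ∈ Set.Ioo (0:ℝ) 1 := by
      obtain ⟨h0, h1⟩ := hmem
      constructor
      · rcases h0.lt_or_eq with h | h
        · exact h
        · exfalso; rw [← h] at hroot; norm_num at hroot
      · rcases h1.lt_or_eq with h | h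
        · exact h
        · exfalso; rw [h] at hroot; norm_num at hroot
    have hiff : ∀ α : ℝ, 0 < α →
        ((1 - α) * (1 + 2 * α ^ 2) / (2 * α ^ 2) < 1 ↔ α₀ < α) := by
      intro α hα
      have h2 : (0:ℝ) < 2 * α ^ 2 := by positivity
      rw [div_lt_one h2]
      constructor
      · intro h
        by_contra hle
        push_neg at hle
        have h3 : α ^ 3 + α / 2 - 1 / 2 ≤ α₀ ^ 3 + α₀ / 2 - 1 / 2 :=
          cubic_mono.le_iff_le.mpr hle
        nlinarith
      · intro h
        have h3 : α₀ ^ 3 + α₀ / 2 - 1 / 2 < α ^ 3 + α / 2 - 1 / 2 := cubic_mono h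
        nlinarith
    refine ⟨α₀, hroot, ?_, hioo, hiff, ?_⟩
    · intro β hβ
      by_contra hne
      rcases lt_or_gt_of_ne hne with h | h
      · have h3 : β ^ 3 + β / 2 - 1 / 2 < α₀ ^ 3 + α₀ / 2 - 1 / 2 := cubic_mono h
        rw [hβ, hroot] at h3; exact lt_irrefl _ h3
      · have h3 : α₀ ^ 3 + α₀ / 2 - 1 / 2 < β ^ 3 + β / 2 - 1 / 2 := cubic_mono h
        rw [hβ, hroot] at h3; exact lt_irrefl _ h3
    · refine ⟨(α₀ + 1) / 2, ⟨by linarith [hioo.2], by linarith [hioo.2]⟩, ?_, by linarith [hioo.2]⟩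
      have hpos : (0:ℝ) < (α₀ + 1) / 2 := by linarith [hioo.1]
      exact (hiff _ hpos).mpr (by linarith [hioo.2])
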